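/- Consider shuffles of the words l₁…l_k and r₁…r_{k'} (order-preserving interleavings, i.e., words of length k+k' over the alphabet {l₁,…,l_k, r₁,…,r_{k'}} containing each letter once, with the l-letters in increasing order and the r-letters in increasing order). For a shuffle w, define λ_w(i) to be the position of letter l_i in w. Consider the rewriting step that replaces a factor l_i r_j by r_j l_i. Then there is a sequence of such steps from shuffle w to shuffle w' if and only if λ_w(i) ≤ λ_{w'}(i) for all i ∈ {1,…,k}. -/
import Mathlib


/-- A shuffle of `l₁…l_k` and `r₁…r_{k'}` is encoded by the strictly monotone
function sending `i` to the position of the letter `l_i`; positions not in the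
image carry the `r`-letters in order.  A swap step replaces a factor `l_i r_j`
by `r_j l_i`, i.e. moves the position of `l_i` one step to the right, provided
the next position is an `r`-position. -/
def ShuffleStep (k k' : ℕ) (f g : Fin k → Fin (k + k')) : Prop :=
  ∃ i : Fin k, ((g i : ℕ) = (f i : ℕ) + 1) ∧ (∀ j, f j ≠ g i) ∧
    ∀ j, j ≠ i → g j = f j

private lemma shuffle_aux (k k' : ℕ) (g : Fin k → Fin (k + k')) (hg : StrictMono g) :
    ∀ n (f : Fin k → Fin (k + k')), StrictMono f → (∀ i, f i ≤ g i) →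
      (∑ i, ((g i : ℕ) - (f i : ℕ))) ≤ n →
      Relation.ReflTransGen (ShuffleStep k k') f g := by
  intro n
  induction n with
  | zero =>
    intro f hf hle hsum
    have hz : ∀ i ∈ Finset.univ, ((g i : ℕ) - (f i : ℕ)) = 0 := by
      rw [← Finset.sum_eq_zero_iff]
      omega
    have : f = g := by
      funext i
      have h1 := hz i (Finset.mem_univ i)
      have h2 := hle i
      rw [Fin.le_def] at h2
      exact Fin.ext (by omega)
    rw [this]
  | succ n ih =>
    intro f hf hle hsum
    by_cases hfg : f = g
    · rw [hfg]
    · have hne : ∃ i, (f i : ℕ) < (g i : ℕ) := by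
        by_contra h
        push_neg at h
        apply hfg
        funext i
        have := hle i
        rw [Fin.le_def] at this
        exact Fin.ext (le_antisymm this (h i))
      set S : Finset (Fin k) := Finset.univ.filter (fun i => (f i : ℕ) < (g i : ℕ)) with hS
      have hSne : S.Nonempty := by
        obtain ⟨i, hi⟩ := hne
        exact ⟨i, Finset.mem_filter.mpr ⟨Finset.mem_univ i, hi⟩⟩
      set i := S.max' hSne with hi
      have hiS : i ∈ S := S.max'_mem hSne
      have hilt : (f i : ℕ) < (g i : ℕ) := by
        simpa [hS] using hiS
      have hbound : (f i : ℕ) + 1 < k + k' := by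
        have := (g i).isLt
        omega
      set v : Fin (k + k') := ⟨(f i : ℕ) + 1, hbound⟩ with hv
      set f' := Function.update f i v with hf'
      -- no l-letter sits at position f i + 1
      have hni : ∀ j, (f j : ℕ) ≠ (f i : ℕ) + 1 := by
        intro j hj
        have hji : i < j := by
          rw [← hf.lt_iff_lt, Fin.lt_def]
          omega
        have hjS : j ∉ S := fun hmem => absurd (S.le_max' j hmem) (not_le.mpr hji)
        have hfg_j : (f j : ℕ) = (g j : ℕ) := by
          have h1 := hle j
          rw [Fin.le_def] at h1
          have h2 : ¬ (f j : ℕ) < (g j : ℕ) := by simpa [hS] using hjS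
          omega
        have : (g i : ℕ) < (g j : ℕ) := by
          rw [← Fin.lt_def]
          exact hg hji
        omega
      have hf'i : (f' i : ℕ) = (f i : ℕ) + 1 := by
        simp [hf', hv]
      have hf'j : ∀ j, j ≠ i → f' j = f j := fun j hj => Function.update_of_ne hj _ _
      have hstep : ShuffleStep k k' f f' := by
        refine ⟨i, hf'i, ?_, hf'j⟩
        intro j hj
        apply hni j
        rw [hj, hf'i]
      have hf'mono : StrictMono f' := by
        intro a b hab
        rw [Fin.lt_def]
        by_cases ha : a = i
        · have hb : b ≠ i := ha ▸ (ne_of_gt hab)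
          rw [ha, hf'i, hf'j b hb]
          have h1 : (f a : ℕ) < (f b : ℕ) := Fin.lt_def.mp (hf hab)
          have h2 := hni b
          rw [ha] at h1
          omega
        · by_cases hb : b = i
          · rw [hb, hf'i, hf'j a ha]
            have h1 : (f a : ℕ) < (f b : ℕ) := Fin.lt_def.mp (hf hab)
            rw [hb] at h1
            omega
          · rw [hf'j a ha, hf'j b hb, ← Fin.lt_def]
            exact hf hab
      have hle' : ∀ j, f' j ≤ g j := by
        intro j
        rcases eq_or_ne j i with rfl | hj
        · rw [Fin.le_def, hf'i]; omega
        · rw [hf'j j hj]; exact hle j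
      have hsum' : ∑ j, ((g j : ℕ) - (f' j : ℕ)) < ∑ j, ((g j : ℕ) - (f j : ℕ)) := by
        apply Finset.sum_lt_sum
        · intro j _
          rcases eq_or_ne j i with rfl | hj
          · rw [hf'i]; omega
          · rw [hf'j j hj]
        · exact ⟨i, Finset.mem_univ i, by rw [hf'i]; omega⟩
      exact Relation.ReflTransGen.head hstep (ih f' hf'mono hle' (by omega))

/-- Path-existence criterion in the shuffle graph: there is a sequence of swap
steps from `w` to `w'` iff the position of each `l_i` in `w` is at most its
position in `w'`. -/
theorem stmt_8 (k k' : ℕ) (f g : Fin k → Fin (k + k'))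
    (hf : StrictMono f) (hg : StrictMono g) :
    Relation.ReflTransGen (ShuffleStep k k') f g ↔ ∀ i, f i ≤ g i := by
  constructor
  · intro h
    clear hf hg
    induction h with
    | refl => exact fun i => le_refl _
    | @tail b c _ hstep ih =>
      intro i
      obtain ⟨j, hj1, _, hj3⟩ := hstep
      have hib := ih i
      rw [Fin.le_def] at hib ⊢
      rcases eq_or_ne i j with rfl | hne
      · omega
      · rw [hj3 i hne]; exact hib
  · intro h
    exact shuffle_aux k k' g hg (∑ i, ((g i : ℕ) - (f i : ℕ))) f hf h le_rfl
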